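/- Let (g̃,T,ω̃) be a quadratic symplectic Lie algebra over a field K of characteristic 0 and let D̃ be the invertible derivation of g̃, skew-symmetric with respect to T, such that ω̃(X,Y) = T(D̃X,Y) for all X,Y in g̃. If there exists a one-dimensional ideal I of g̃ contained in the centre of g̃ with D̃(I) ⊆ I, then there exist a quadratic symplectic Lie algebra (g,B,ω), a derivation δ of g skew-symmetric with respect to B, λ ∈ K∖{0} and c ∈ g with [δ,D] − λδ = ad_g(c) (where D is the invertible skew-symmetric derivation of (g,B) with ω(x,y) = B(Dx,y)), such that (g̃,T,ω̃) is isomorphic to the quadratic symplectic double extension of (g,B,ω) by the one-dimensional algebra by means of (δ,c), via a Lie algebra isomorphism carrying T and ω̃ to the corresponding forms. -/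

import Mathlib

set_option maxHeartbeats 1000000 in
theorem stmt_12 (K : Type u) [Field K] [CharZero K]
    (gt : Type v) [LieRing gt] [LieAlgebra K gt] [Module.Finite K gt]
    (T ωt : LinearMap.BilinForm K gt)
    (hTnd : T.Nondegenerate)
    (hTsymm : ∀ x y : gt, T x y = T y x)
    (hTinv : ∀ x y z : gt, T ⁅x, y⁆ z = T x ⁅y, z⁆)
    (hωnd : ωt.Nondegenerate)
    (hωalt : ∀ x : gt, ωt x x = 0)
    (hωcocy : ∀ x y z : gt, ωt ⁅x, y⁆ z + ωt ⁅y, z⁆ x + ωt ⁅z, x⁆ y = 0)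
    (Dt : gt →ₗ[K] gt) (hDtbij : Function.Bijective Dt)
    (hDtder : ∀ x y : gt, Dt ⁅x, y⁆ = ⁅Dt x, y⁆ + ⁅x, Dt y⁆)
    (hDtskew : ∀ x y : gt, T (Dt x) y = - T x (Dt y))
    (hωT : ∀ x y : gt, ωt x y = T (Dt x) y)
    (I : LieIdeal K gt)
    (hIdim : Module.finrank K I = 1)
    (hIcent : I ≤ LieAlgebra.center K gt)
    (hIinv : ∀ x ∈ I, Dt x ∈ I) :
    ∃ (g : Type v) (_ : LieRing g) (_ : LieAlgebra K g) (_ : Module.Finite K g)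
      (B ω : LinearMap.BilinForm K g) (D δ : g →ₗ[K] g) (lam : K) (c : g),
      B.Nondegenerate ∧ (∀ x y : g, B x y = B y x) ∧
      (∀ x y z : g, B ⁅x, y⁆ z = B x ⁅y, z⁆) ∧
      ω.Nondegenerate ∧ (∀ x : g, ω x x = 0) ∧
      (∀ x y z : g, ω ⁅x, y⁆ z + ω ⁅y, z⁆ x + ω ⁅z, x⁆ y = 0) ∧
      Function.Bijective D ∧
      (∀ x y : g, D ⁅x, y⁆ = ⁅D x, y⁆ + ⁅x, D y⁆) ∧
      (∀ x y : g, B (D x) y = - B x (D y)) ∧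
      (∀ x y : g, ω x y = B (D x) y) ∧
      (∀ x y : g, δ ⁅x, y⁆ = ⁅δ x, y⁆ + ⁅x, δ y⁆) ∧
      (∀ x y : g, B (δ x) y = - B x (δ y)) ∧
      lam ≠ 0 ∧
      (∀ x : g, δ (D x) - D (δ x) - lam • δ x = ⁅c, x⁆) ∧
      ∃ φ : gt ≃ₗ[K] K × g × K,
        (∀ p q : gt, φ ⁅p, q⁆ =
          (0, ⁅(φ p).2.1, (φ q).2.1⁆ + (φ p).1 • δ (φ q).2.1 - (φ q).1 • δ (φ p).2.1,
            B (δ (φ p).2.1) (φ q).2.1)) ∧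
        (∀ p q : gt, T p q =
          B (φ p).2.1 (φ q).2.1 + (φ p).1 * (φ q).2.2 + (φ q).1 * (φ p).2.2) ∧
        (∀ p : gt, φ (Dt p) =
          (-(lam * (φ p).1), D (φ p).2.1 - (φ p).1 • c,
            B c (φ p).2.1 + lam * (φ p).2.2)) := by
  classical
  -- ### choose a spanning vector of I
  obtain ⟨v, hv0, hv⟩ := finrank_eq_one_iff'.mp hIdim
  set estar : gt := (v : gt) with hestar_def
  have hestar0 : estar ≠ 0 := fun h => hv0 (Subtype.ext h)
  have hcent : ∀ y : gt, ⁅y, estar⁆ = 0 :=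
    (LieModule.mem_maxTrivSubmodule K gt gt estar).mp (hIcent v.2)
  have hcent' : ∀ y : gt, ⁅estar, y⁆ = 0 := fun y => by
    rw [← lie_skew, hcent y, neg_zero]
  -- ### the eigenvalue lam
  obtain ⟨lam, hlam⟩ : ∃ lam : K, Dt estar = lam • estar := by
    obtain ⟨cc, hcc⟩ := hv ⟨Dt estar, hIinv estar v.2⟩
    exact ⟨cc, by simpa using congrArg Subtype.val hcc.symm⟩
  have hlam0 : lam ≠ 0 := by
    intro h
    apply hestar0
    apply hDtbij.1
    rw [hlam, h, zero_smul, map_zero]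
  -- ### T estar estar = 0
  have hTss : T estar estar = 0 := by
    have h1 : T (Dt estar) estar = 0 := by rw [← hωT]; exact hωalt estar
    rw [hlam] at h1
    simp only [map_smul, LinearMap.smul_apply, smul_eq_mul] at h1
    exact (mul_eq_zero.mp h1).resolve_left hlam0
  -- ### construct the hyperbolic partner e
  obtain ⟨u0, hu0⟩ : ∃ u0 : gt, T estar u0 ≠ 0 := by
    by_contra h
    push_neg at h
    exact hestar0 (hTnd.1 estar h)
  set e0 : gt := (T estar u0)⁻¹ • u0 with he0def
  have hTse0 : T estar e0 = 1 := by
    rw [he0def]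
    simp only [map_smul, smul_eq_mul]
    exact inv_mul_cancel₀ hu0
  have hTe0s : T e0 estar = 1 := by rw [hTsymm]; exact hTse0
  set e : gt := e0 - (T e0 e0 / 2) • estar with hedef
  have hTse : T estar e = 1 := by
    rw [hedef]
    simp only [map_sub, map_smul, smul_eq_mul, hTss, hTse0, mul_zero, sub_zero]
  have hTes : T e estar = 1 := by rw [hTsymm]; exact hTse
  have hTee : T e e = 0 := by
    rw [hedef]
    simp only [map_sub, map_smul, LinearMap.sub_apply, LinearMap.smul_apply, smul_eq_mul,
      hTss, hTse0, hTe0s]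
    ring
  -- ### The subspace W
  set W : Submodule K gt := LinearMap.ker ((T.flip e).prod (T.flip estar)) with hWdef
  have hmemW : ∀ x : gt, x ∈ W ↔ T x e = 0 ∧ T x estar = 0 := by
    intro x
    rw [hWdef, LinearMap.mem_ker]
    simp [LinearMap.prod_apply, LinearMap.flip_apply, Prod.ext_iff]
  have hWe : ∀ z : gt, z ∈ W → T z e = 0 := fun z hz => ((hmemW z).mp hz).1
  have hWs : ∀ z : gt, z ∈ W → T z estar = 0 := fun z hz => ((hmemW z).mp hz).2
  have hWe' : ∀ z : gt, z ∈ W → T e z = 0 := fun z hz => by rw [hTsymm]; exact hWe z hz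
  have hWs' : ∀ z : gt, z ∈ W → T estar z = 0 := fun z hz => by rw [hTsymm]; exact hWs z hz
  -- ### the projection Pl onto W
  set Pl : gt →ₗ[K] gt :=
    LinearMap.id - (T.flip estar).smulRight e - (T.flip e).smulRight estar with hPldef
  have hPl_apply : ∀ p : gt, Pl p = p - T p estar • e - T p e • estar := fun p => rfl
  have hPl_mem : ∀ p : gt, Pl p ∈ W := by
    intro p
    rw [hmemW]
    constructor <;>
    · simp only [hPl_apply, map_sub, map_smul, LinearMap.sub_apply, LinearMap.smul_apply,
        smul_eq_mul, hTee, hTse, hTes, hTss]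
      ring
  have hPl_W : ∀ p : gt, p ∈ W → Pl p = p := by
    intro p hp
    rw [hmemW] at hp
    rw [hPl_apply, hp.1, hp.2, zero_smul, zero_smul, sub_zero, sub_zero]
  have hPl_e : Pl e = 0 := by
    rw [hPl_apply, hTes, hTee, one_smul, zero_smul, sub_zero, sub_self]
  have hPl_s : Pl estar = 0 := by
    rw [hPl_apply, hTss, hTse, zero_smul, one_smul, sub_zero, sub_self]
  have hdecomp : ∀ p : gt, T p estar • e + Pl p + T p e • estar = p := by
    intro p
    rw [hPl_apply]
    abel
  have hPle : ∀ p : gt, T (Pl p) e = 0 := fun p => hWe _ (hPl_mem p)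
  have hPls : ∀ p : gt, T (Pl p) estar = 0 := fun p => hWs _ (hPl_mem p)
  have hPle' : ∀ p : gt, T e (Pl p) = 0 := fun p => hWe' _ (hPl_mem p)
  have hPls' : ∀ p : gt, T estar (Pl p) = 0 := fun p => hWs' _ (hPl_mem p)
  -- ### bracket facts
  have hTb_s : ∀ p q : gt, T ⁅p, q⁆ estar = 0 := by
    intro p q
    rw [hTinv, hcent, map_zero]
  have hze : ∀ z : gt, ⁅z, e⁆ = -⁅e, z⁆ := fun z => neg_eq_iff_eq_neg.mp (lie_skew e z)
  have hδg : ∀ x y : gt, T ⁅e, x⁆ y = - T x ⁅e, y⁆ := by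
    intro x y
    have h1 : T ⁅x, e⁆ y = T x ⁅e, y⁆ := hTinv x e y
    rw [hze x, map_neg, LinearMap.neg_apply] at h1
    exact neg_eq_iff_eq_neg.mp h1
  have hhalf : ∀ a : K, a = -a → a = 0 := by
    intro a ha
    have h2 : (2 : K) * a = 0 := by linear_combination ha
    exact (mul_eq_zero.mp h2).resolve_left (by norm_num)
  have hbeW : ∀ z : gt, z ∈ W → ⁅e, z⁆ ∈ W := by
    intro z hz
    rw [hmemW]
    refine ⟨?_, hTb_s _ _⟩
    simpa [lie_self] using hδg z e
  have hTbe0 : ∀ z : gt, z ∈ W → T ⁅e, z⁆ e = 0 := fun z hz => hWe _ (hbeW z hz)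
  -- ### action of Dt on the pieces
  have hTDtes : T (Dt e) estar = -lam := by
    rw [hDtskew, hlam]
    simp only [map_smul, smul_eq_mul, hTes, mul_one]
  have hTDtee : T (Dt e) e = 0 := by
    apply hhalf
    conv_lhs => rw [hDtskew e e]
    rw [hTsymm e (Dt e)]
  set cg : gt := -(Pl (Dt e)) with hcgdef
  have hcgW : cg ∈ W := neg_mem (hPl_mem _)
  have hPlDte : Pl (Dt e) = -cg := by rw [hcgdef, neg_neg]
  have hDte : Dt e = -(lam • e) - cg := by
    have h := hdecomp (Dt e)
    rw [hTDtes, hTDtee, zero_smul, add_zero, hPlDte] at h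
    rw [← h, neg_smul]
    abel
  have hDtW : ∀ z : gt, z ∈ W → Dt z = Pl (Dt z) + T z cg • estar := by
    intro z hz
    have h1 : T (Dt z) estar = 0 := by
      rw [hDtskew, hlam]
      simp only [map_smul, smul_eq_mul, hWs z hz, mul_zero, neg_zero]
    have h2 : T (Dt z) e = T z cg := by
      rw [hDtskew, hDte]
      simp only [map_sub, map_neg, map_smul, smul_eq_mul, hWe z hz, mul_zero, neg_zero,
        zero_sub, neg_neg]
    have h := hdecomp (Dt z)
    rw [h1, h2, zero_smul, zero_add] at h
    exact h.symm
  -- ### the projection as a map into W, and the Lie structure on W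
  set P' : gt →ₗ[K] W := LinearMap.codRestrict W Pl hPl_mem with hP'def
  have hP'val : ∀ p : gt, ((P' p : W) : gt) = Pl p := fun p => rfl
  letI instBr : Bracket W W := ⟨fun x y => P' ⁅(x : gt), (y : gt)⁆⟩
  have hbrval : ∀ x y : W, ((⁅x, y⁆ : W) : gt) = Pl ⁅(x : gt), (y : gt)⁆ := fun x y => rfl
  have hPlb : ∀ p q : gt, Pl ⁅p, q⁆ = ⁅p, q⁆ - T ⁅p, q⁆ e • estar := by
    intro p q
    rw [hPl_apply, hTb_s, zero_smul, sub_zero]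
  have hlie_Pl_left : ∀ p q z : gt, ⁅Pl ⁅p, q⁆, z⁆ = ⁅⁅p, q⁆, z⁆ := by
    intro p q z
    rw [hPlb, sub_lie, smul_lie, hcent', smul_zero, sub_zero]
  have hlie_Pl_right : ∀ p q z : gt, ⁅z, Pl ⁅p, q⁆⁆ = ⁅z, ⁅p, q⁆⁆ := by
    intro p q z
    rw [hPlb, lie_sub, lie_smul, hcent, smul_zero, sub_zero]
  letI instLR : LieRing W :=
    { (inferInstance : AddCommGroup W), instBr with
      add_lie := by
        intro x y z
        apply Subtype.ext
        show Pl ⁅((x : gt) + (y : gt)), (z : gt)⁆ = Pl ⁅(x : gt), (z : gt)⁆ + Pl ⁅(y : gt), (z : gt)⁆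
        rw [add_lie, map_add]
      lie_add := by
        intro x y z
        apply Subtype.ext
        show Pl ⁅(x : gt), (y : gt) + (z : gt)⁆ = Pl ⁅(x : gt), (y : gt)⁆ + Pl ⁅(x : gt), (z : gt)⁆
        rw [lie_add, map_add]
      lie_self := by
        intro x
        apply Subtype.ext
        show Pl ⁅(x : gt), (x : gt)⁆ = 0
        rw [lie_self, map_zero]
      leibniz_lie := by
        intro x y z
        apply Subtype.ext
        show Pl ⁅(x : gt), Pl ⁅(y : gt), (z : gt)⁆⁆ =
          Pl ⁅Pl ⁅(x : gt), (y : gt)⁆, (z : gt)⁆ + Pl ⁅(y : gt), Pl ⁅(x : gt), (z : gt)⁆⁆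
        rw [hlie_Pl_right, hlie_Pl_left, hlie_Pl_right, ← map_add, leibniz_lie] }
  letI instLA : LieAlgebra K W :=
    { lie_smul := by
        intro t x y
        apply Subtype.ext
        show Pl ⁅(x : gt), t • (y : gt)⁆ = t • Pl ⁅(x : gt), (y : gt)⁆
        rw [lie_smul, map_smul] }
  -- ### the bilinear forms and the maps D and delta on W
  set B : LinearMap.BilinForm K W := T.restrict W with hBdef
  have hBval : ∀ x y : W, B x y = T (x : gt) (y : gt) := fun x y => rfl
  set Dm : W →ₗ[K] W := P' ∘ₗ Dt ∘ₗ W.subtype with hDmdef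
  have hDmval : ∀ x : W, ((Dm x : W) : gt) = Pl (Dt (x : gt)) := fun x => rfl
  have hDmval' : ∀ x : W, ((Dm x : W) : gt) = Dt (x : gt) - T (x : gt) cg • estar := by
    intro x
    rw [hDmval, eq_sub_iff_add_eq]
    exact (hDtW _ x.2).symm
  set dl : W →ₗ[K] W := P' ∘ₗ (LieAlgebra.ad K gt e) ∘ₗ W.subtype with hdldef
  have hdlval : ∀ x : W, ((dl x : W) : gt) = ⁅e, (x : gt)⁆ := by
    intro x
    show Pl ⁅e, (x : gt)⁆ = ⁅e, (x : gt)⁆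
    exact hPl_W _ (hbeW _ x.2)
  set c : W := ⟨cg, hcgW⟩ with hcdef
  have hcval : ((c : W) : gt) = cg := rfl
  -- ### properties of B
  have hBsymm : ∀ x y : W, B x y = B y x := by
    intro x y
    rw [hBval, hBval]
    exact hTsymm _ _
  have hBnd : B.Nondegenerate := by
   have hBL : B.SeparatingLeft := by
    intro x hx
    apply Subtype.ext
    show (x : gt) = 0
    apply hTnd.1
    intro p
    have hx' : T (x : gt) (Pl p) = 0 := by
      have h := hx (P' p)
      rwa [hBval, hP'val] at h
    calc T (x : gt) p = T x (T p estar • e + Pl p + T p e • estar) := by rw [hdecomp p]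
    _ = 0 := by
      simp only [map_add, map_smul, smul_eq_mul, hWe _ x.2, hWs _ x.2, hx', mul_zero]
      ring
   exact ⟨hBL, fun y hy => hBL y (fun n => by rw [hBsymm]; exact hy n)⟩
  have hBinv : ∀ x y z : W, B ⁅x, y⁆ z = B x ⁅y, z⁆ := by
    intro x y z
    rw [hBval, hBval, hbrval, hbrval, hPlb, hPlb]
    simp only [map_sub, map_smul, LinearMap.sub_apply, LinearMap.smul_apply, smul_eq_mul,
      hWs _ x.2, hWs' _ z.2]
    rw [hTinv]
    ring
  -- ### properties of Dm
  have hDskew : ∀ x y : W, B (Dm x) y = - B x (Dm y) := by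
    intro x y
    rw [hBval, hBval, hDmval' x, hDmval' y]
    simp only [map_sub, map_smul, LinearMap.sub_apply, LinearMap.smul_apply, smul_eq_mul,
      hWs' _ y.2, hWs _ x.2, mul_zero, sub_zero]
    rw [hDtskew]
  have hDder : ∀ x y : W, Dm ⁅x, y⁆ = ⁅Dm x, y⁆ + ⁅x, Dm y⁆ := by
    intro x y
    apply Subtype.ext
    show Pl (Dt (Pl ⁅(x : gt), (y : gt)⁆)) =
      Pl ⁅((Dm x : W) : gt), (y : gt)⁆ + Pl ⁅(x : gt), ((Dm y : W) : gt)⁆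
    rw [hPlb]
    rw [map_sub, map_smul, hlam, map_sub, map_smul, map_smul, hPl_s, smul_zero, smul_zero,
      sub_zero]
    rw [hDtder, map_add]
    rw [hDmval' x, hDmval' y, sub_lie, lie_sub, smul_lie, lie_smul, hcent', hcent,
      smul_zero, smul_zero, sub_zero, sub_zero]
  have hDminj : Function.Injective Dm := by
    have hker : ∀ z : W, Dm z = 0 → z = 0 := by
      intro z hz
      have hval : Pl (Dt (z : gt)) = 0 := by
        have h := congrArg Subtype.val hz
        rwa [hDmval] at h
      have hDz : Dt (z : gt) = T (z : gt) cg • estar := by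
        have h := hDtW _ z.2
        rwa [hval, zero_add] at h
      have hx : (z : gt) = (T (z : gt) cg * lam⁻¹) • estar := by
        apply hDtbij.1
        rw [hDz, map_smul, hlam, smul_smul, mul_assoc, inv_mul_cancel₀ hlam0, mul_one]
      have h0 : T (z : gt) e = 0 := hWe _ z.2
      rw [hx] at h0
      simp only [map_smul, LinearMap.smul_apply, smul_eq_mul, hTse, mul_one] at h0
      apply Subtype.ext
      rw [hx, h0, zero_smul]
      rfl
    intro a b hab
    have h := hker (a - b) (by rw [map_sub, hab, sub_self])
    exact sub_eq_zero.mp h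
  have hDmbij : Function.Bijective Dm :=
    ⟨hDminj, LinearMap.injective_iff_surjective.mp hDminj⟩
  -- ### properties of omega
  have hωnd' : LinearMap.BilinForm.Nondegenerate (B ∘ₗ Dm : LinearMap.BilinForm K W) := by
    refine ⟨?_, ?_⟩
    · intro x hx
      have h0 : Dm x = 0 := hBnd.1 _ (fun n => hx n)
      exact hDminj (by rw [h0, map_zero])
    · intro y hy
      have h0 : Dm y = 0 := hBnd.2 _ (fun n => by rw [← neg_eq_zero, ← hDskew]; exact hy n)
      exact hDminj (by rw [h0, map_zero])
  have hωalt' : ∀ x : W, (B ∘ₗ Dm : LinearMap.BilinForm K W) x x = 0 := by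
    intro x
    show B (Dm x) x = 0
    rw [hBval, hDmval' x]
    simp only [map_sub, map_smul, LinearMap.sub_apply, LinearMap.smul_apply, smul_eq_mul,
      hWs' _ x.2, mul_zero, sub_zero]
    apply hhalf
    conv_lhs => rw [hDtskew]
    rw [hTsymm (x : gt) (Dt (x : gt))]
  have hS2 : ∀ x y z : W, B (Dm ⁅x, y⁆) z = -(B (Dm z) ⁅x, y⁆) := by
    intro x y z
    rw [hDskew, hBsymm ⁅x, y⁆ (Dm z)]
  have hS1 : ∀ x y z : W, B (Dm ⁅x, y⁆) z = B (Dm x) ⁅y, z⁆ + B (Dm y) ⁅z, x⁆ := by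
    intro x y z
    rw [hDder x y, map_add, LinearMap.add_apply, hBinv, hBinv]
    congr 1
    rw [← hBinv (Dm y) z x]
    exact hBsymm _ _
  have hωcocy' : ∀ x y z : W, (B ∘ₗ Dm : LinearMap.BilinForm K W) ⁅x, y⁆ z +
      (B ∘ₗ Dm : LinearMap.BilinForm K W) ⁅y, z⁆ x +
      (B ∘ₗ Dm : LinearMap.BilinForm K W) ⁅z, x⁆ y = 0 := by
    intro x y z
    show B (Dm ⁅x, y⁆) z + B (Dm ⁅y, z⁆) x + B (Dm ⁅z, x⁆) y = 0
    linear_combination (1/3 : K) * (hS1 x y z + hS1 y z x + hS1 z x y) +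
      (2/3 : K) * (hS2 x y z + hS2 y z x + hS2 z x y)
  -- ### properties of dl
  have hdlder : ∀ x y : W, dl ⁅x, y⁆ = ⁅dl x, y⁆ + ⁅x, dl y⁆ := by
    intro x y
    apply Subtype.ext
    simp only [Submodule.coe_add, hdlval, hbrval]
    rw [hlie_Pl_right, ← map_add, ← leibniz_lie, ← hlie_Pl_right x y e]
    exact (hPl_W _ (hbeW _ (hPl_mem _))).symm
  have hdlskew : ∀ x y : W, B (dl x) y = - B x (dl y) := by
    intro x y
    rw [hBval, hBval, hdlval, hdlval]
    exact hδg _ _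
  -- ### the compatibility relation
  have hrel : ∀ x : W, dl (Dm x) - Dm (dl x) - lam • dl x = ⁅c, x⁆ := by
    intro x
    apply Subtype.ext
    simp only [AddSubgroupClass.coe_sub, SetLike.val_smul, hdlval, hDmval, hbrval, hcval]
    have h1 : ⁅e, Pl (Dt (x : gt))⁆ = ⁅e, Dt (x : gt)⁆ := by
      rw [hPl_apply]
      simp only [lie_sub, lie_smul, lie_self, hcent e, smul_zero, sub_zero]
    have h2 : Pl ⁅e, Dt (x : gt)⁆ = ⁅e, Dt (x : gt)⁆ := by
      rw [← h1]
      exact hPl_W _ (hbeW _ (hPl_mem _))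
    rw [h1, hDtder e (x : gt), hDte]
    simp only [map_add, map_sub, map_neg, map_smul, sub_lie, neg_lie, smul_lie, h2,
      hPl_W _ (hbeW _ x.2)]
    abel
  -- ### the isomorphism
  set F : gt →ₗ[K] K × W × K := (T.flip estar).prod (P'.prod (T.flip e)) with hFdef
  set G : (K × W × K) →ₗ[K] gt :=
      (LinearMap.fst K K (W × K)).smulRight e
      + W.subtype ∘ₗ (LinearMap.fst K W K) ∘ₗ (LinearMap.snd K K (W × K))
      + ((LinearMap.snd K W K) ∘ₗ (LinearMap.snd K K (W × K))).smulRight estar with hGdef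
  have hGval : ∀ (a : K) (w : W) (b : K), G (a, w, b) = a • e + (w : gt) + b • estar :=
    fun a w b => rfl
  have hFval : ∀ p : gt, F p = (T p estar, P' p, T p e) := fun p => rfl
  have hFG : F ∘ₗ G = LinearMap.id := by
    apply LinearMap.ext
    rintro ⟨a, w, b⟩
    rw [LinearMap.comp_apply, hGval, hFval, LinearMap.id_apply]
    refine Prod.ext_iff.mpr ⟨?_, Prod.ext_iff.mpr ⟨?_, ?_⟩⟩
    · show T (a • e + (w : gt) + b • estar) estar = a
      simp only [map_add, map_smul, LinearMap.add_apply, LinearMap.smul_apply, smul_eq_mul,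
        hTes, hTss, hWs _ w.2, mul_one, mul_zero, add_zero]
    · apply Subtype.ext
      show Pl (a • e + (w : gt) + b • estar) = (w : gt)
      rw [map_add, map_add, map_smul, map_smul, hPl_e, hPl_s, hPl_W _ w.2, smul_zero,
        smul_zero, zero_add, add_zero]
    · show T (a • e + (w : gt) + b • estar) e = b
      simp only [map_add, map_smul, LinearMap.add_apply, LinearMap.smul_apply, smul_eq_mul,
        hTee, hTse, hWe _ w.2, mul_one, mul_zero, zero_add, add_zero]
  have hGF : G ∘ₗ F = LinearMap.id := by
    apply LinearMap.ext
    intro p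
    rw [LinearMap.comp_apply, hFval, hGval, LinearMap.id_apply]
    exact hdecomp p
  set φ : gt ≃ₗ[K] K × W × K := LinearEquiv.ofLinear F G hFG hGF with hφdef
  have hφ1 : ∀ p : gt, (φ p).1 = T p estar := fun p => rfl
  have hφ21 : ∀ p : gt, (((φ p).2.1 : W) : gt) = Pl p := fun p => rfl
  have hφ22 : ∀ p : gt, (φ p).2.2 = T p e := fun p => rfl
  -- bracket decomposition
  have hpq : ∀ p q : gt, ⁅p, q⁆ =
      ⁅Pl p, Pl q⁆ + T p estar • ⁅e, Pl q⁆ - T q estar • ⁅e, Pl p⁆ := by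
    intro p q
    conv_lhs => rw [← hdecomp p, ← hdecomp q]
    simp only [add_lie, lie_add, smul_lie, lie_smul, lie_self, hcent, hcent', smul_zero,
      zero_add, add_zero]
    rw [hze (Pl p), smul_neg]
    abel
  -- ### final assembly
  refine ⟨W, instLR, instLA, inferInstance, B, B ∘ₗ Dm, Dm, dl, lam, c,
    hBnd, hBsymm, hBinv, hωnd', hωalt', hωcocy', hDmbij, hDder, hDskew,
    (fun x y => rfl), hdlder, hdlskew, hlam0, hrel, φ, ?_, ?_, ?_⟩
  · -- bracket formula
    intro p q
    refine Prod.ext_iff.mpr ⟨?_, Prod.ext_iff.mpr ⟨?_, ?_⟩⟩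
    · show T ⁅p, q⁆ estar = 0
      exact hTb_s p q
    · apply Subtype.ext
      simp only [AddSubgroupClass.coe_sub, Submodule.coe_add, SetLike.val_smul, hbrval,
        hdlval, hφ21, hφ1]
      rw [hpq p q]
      simp only [map_add, map_sub, map_smul]
      rw [hPl_W _ (hbeW _ (hPl_mem q)), hPl_W _ (hbeW _ (hPl_mem p))]
    · show T ⁅p, q⁆ e = B (dl (φ p).2.1) ((φ q).2.1)
      rw [hBval, hdlval, hφ21, hφ21]
      rw [hpq p q]
      simp only [map_add, map_sub, map_smul, LinearMap.add_apply, LinearMap.sub_apply,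
        LinearMap.smul_apply, smul_eq_mul, hTbe0 _ (hPl_mem p), hTbe0 _ (hPl_mem q),
        mul_zero, add_zero, sub_zero]
      rw [hTinv, hze, map_neg, hδg]
  · -- scalar product formula
    intro p q
    rw [hBval, hφ21, hφ21, hφ1, hφ1, hφ22, hφ22]
    conv_lhs => rw [← hdecomp p, ← hdecomp q]
    simp only [map_add, map_smul, LinearMap.add_apply, LinearMap.smul_apply, smul_eq_mul,
      hTee, hTes, hTse, hTss, hPle, hPls, hPle', hPls']
    ring
  · -- derivation formula
    intro p
    refine Prod.ext_iff.mpr ⟨?_, Prod.ext_iff.mpr ⟨?_, ?_⟩⟩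
    · show T (Dt p) estar = -(lam * (φ p).1)
      rw [hφ1, hDtskew, hlam]
      simp only [map_smul, smul_eq_mul]
    · apply Subtype.ext
      simp only [AddSubgroupClass.coe_sub, SetLike.val_smul, hφ21, hDmval, hcval, hφ1]
      conv_lhs => rw [← hdecomp p]
      simp only [map_add, map_smul, hPlDte, hlam, hPl_s, smul_zero, smul_neg, add_zero]
      abel
    · show T (Dt p) e = B c ((φ p).2.1) + lam * (φ p).2.2
      rw [hBval, hφ21, hcval, hφ22]
      have hpcg : T p cg = T cg (Pl p) := by
        rw [hTsymm p cg]
        conv_lhs => rw [← hdecomp p]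
        simp only [map_add, map_smul, smul_eq_mul, hWe _ hcgW, hWs _ hcgW, mul_zero,
          zero_add, add_zero]
      rw [hDtskew, hDte]
      simp only [map_sub, map_neg, map_smul, smul_eq_mul]
      rw [hpcg]
      ring
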